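/- For every integer n ≥ 6, the Hadwiger number of the complement of the wheel graph W_n equals ⌊3(n−1)/4⌋, i.e., ⌊3(n−1)/4⌋ is the largest k such that K_k is a minor of the complement of W_n. -/

import Mathlib

open SimpleGraph

/-- `H` is a minor of `G` (branch-set / minor-model definition): each vertex of `H`
is represented by a connected branch set in `G`, branch sets are pairwise disjoint,
and edges of `H` are realized by edges between the corresponding branch sets. -/
def IsMinorOf {α β : Type*} (H : SimpleGraph α) (G : SimpleGraph β) : Prop :=
  ∃ f : α → Set β,
    (∀ a, (G.induce (f a)).Connected) ∧
    (∀ a b, a ≠ b → Disjoint (f a) (f b)) ∧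
    (∀ a b, H.Adj a b → ∃ u ∈ f a, ∃ v ∈ f b, G.Adj u v)

/-- The wheel graph `W n` on `n` vertices: hub `none` joined to the cycle
`C (n-1)` on the rim vertices `some i`, `i : ZMod (n-1)`. -/
def wheelGraph (n : ℕ) : SimpleGraph (Option (ZMod (n - 1))) where
  Adj x y := x ≠ y ∧
    (x = none ∨ y = none ∨
      ∃ i j : ZMod (n - 1), x = some i ∧ y = some j ∧ (i - j = 1 ∨ j - i = 1))
  symm := by
    refine ⟨?_⟩
    rintro x y ⟨hne, h⟩
    refine ⟨hne.symm, ?_⟩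
    rcases h with h | h | ⟨i, j, hx, hy, hij⟩
    · exact Or.inr (Or.inl h)
    · exact Or.inl h
    · exact Or.inr (Or.inr ⟨j, i, hy, hx, hij.symm⟩)
  loopless := ⟨fun x h => h.1 rfl⟩

lemma natCast_inj' {m x y : ℕ} (hx : x < m) (hy : y < m) (h : (x : ZMod m) = y) : x = y := by
  haveI : NeZero m := ⟨by omega⟩
  have := congrArg ZMod.val h
  rwa [ZMod.val_natCast_of_lt hx, ZMod.val_natCast_of_lt hy] at this

lemma sub_eq_one_iff' {m : ℕ} {x y : ℕ} (hx : x < m) (hy : y < m) :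
    ((x : ZMod m) - y = 1) ↔ (x = y + 1 ∨ (x = 0 ∧ y + 1 = m)) := by
  haveI : NeZero m := ⟨by omega⟩
  rw [sub_eq_iff_eq_add]
  rw [show (1 : ZMod m) + (y : ZMod m) = ((y+1 : ℕ) : ZMod m) by push_cast; ring]
  rw [ZMod.natCast_eq_natCast_iff]
  unfold Nat.ModEq
  rw [Nat.mod_eq_of_lt hx]
  rcases Nat.lt_or_ge (y+1) m with h | h
  · rw [Nat.mod_eq_of_lt h]; omega
  · have : y + 1 = m := by omega
    rw [this, Nat.mod_self]; omega

lemma compl_adj_of_nat {n x y : ℕ} (hx : x < n - 1) (hy : y < n - 1) (hxy : x ≠ y)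
    (h2 : x + 1 ≠ y) (h3 : y + 1 ≠ x)
    (h4 : ¬(x = 0 ∧ y + 1 = n - 1)) (h5 : ¬(y = 0 ∧ x + 1 = n - 1)) :
    (wheelGraph n)ᶜ.Adj (some (x : ZMod (n-1))) (some (y : ZMod (n-1))) := by
  have hne : (x : ZMod (n-1)) ≠ (y : ZMod (n-1)) := fun h => hxy (natCast_inj' hx hy h)
  rw [compl_adj]
  dsimp only [wheelGraph]
  refine ⟨by simpa using hne, ?_⟩
  rintro ⟨-, h | h | ⟨i, j, hi, hj, hd⟩⟩
  · exact Option.some_ne_none _ h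
  · exact Option.some_ne_none _ h
  · rw [Option.some.injEq] at hi hj
    subst hi; subst hj
    rw [sub_eq_one_iff' hx hy, sub_eq_one_iff' hy hx] at hd
    omega

lemma connected_induce_singleton {β : Type*} (G : SimpleGraph β) (u : β) :
    (G.induce {u}).Connected := by
  rw [connected_iff]
  constructor
  · rintro ⟨a, ha⟩ ⟨b, hb⟩
    simp only [Set.mem_singleton_iff] at ha hb
    subst ha; subst hb; exact Reachable.refl _
  · exact ⟨⟨u, rfl⟩⟩

lemma connected_induce_pair {β : Type*} (G : SimpleGraph β) (u v : β) (h : G.Adj u v) :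
    (G.induce {u,v}).Connected := by
  rw [connected_iff]
  refine ⟨?_, ⟨⟨u, by simp⟩⟩⟩
  have key : ∀ a : ({u,v} : Set β), (G.induce {u,v}).Reachable a ⟨u, by simp⟩ := by
    rintro ⟨a, ha⟩
    simp only [Set.mem_insert_iff, Set.mem_singleton_iff] at ha
    rcases ha with rfl | rfl
    · exact Reachable.refl _
    · have : (G.induce {u,a}).Adj ⟨a, by simp⟩ ⟨u, by simp⟩ := by simp [h.symm]
      exact this.reachable
  intro a b
  exact (key a).trans (key b).symm

/-- position of the `i`-th pair element -/
def Lf (s i : ℕ) : ℕ := if i + 2 ≤ s then 2*i+1 else i + s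

lemma Lf_lb {s : ℕ} (hs : 1 ≤ s) (i : ℕ) : 1 ≤ Lf s i := by unfold Lf; split <;> omega

lemma Lf_ub {s p : ℕ} (hsp : s ≤ 2*p) {i : ℕ} (hi : i < 2*p) : Lf s i < s + 2*p := by
  unfold Lf; split <;> omega

lemma Lf_gap (s : ℕ) {i j : ℕ} (hij : i < j) : Lf s i + (j - i) ≤ Lf s j := by
  unfold Lf; split <;> split <;> omega

lemma Lf_ne_even {s p : ℕ} {i t : ℕ} (hi : i < 2*p) (ht : t < s) : Lf s i ≠ 2*t := by
  unfold Lf; split <;> omega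

lemma sp_witness {s p t j : ℕ} (hp : 2 ≤ p) (hs : 1 ≤ s) (hsp : s ≤ 2*p) (ht : t < s)
    (hj : j < p) :
    ∃ w, (w = Lf s j ∨ w = Lf s (j+p)) ∧ 2*t ≠ w ∧ 2*t+1 ≠ w ∧ w+1 ≠ 2*t ∧
      ¬(2*t = 0 ∧ w + 1 = s + 2*p) ∧ ¬(w = 0 ∧ 2*t + 1 = s + 2*p) := by
  by_cases hc : (2*t+1 = Lf s j ∨ Lf s j + 1 = 2*t ∨ (2*t = 0 ∧ Lf s j + 1 = s + 2*p))
  · refine ⟨Lf s (j+p), Or.inr rfl, ?_⟩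
    unfold Lf at hc ⊢; split_ifs at hc ⊢ <;> omega
  · refine ⟨Lf s j, Or.inl rfl, ?_⟩
    unfold Lf at hc ⊢; split_ifs at hc ⊢ <;> omega

lemma lower_bound {n : ℕ} (hn : 6 ≤ n) :
    IsMinorOf (⊤ : SimpleGraph (Fin (3 * (n-1) / 4))) (wheelGraph n)ᶜ := by
  set k := 3 * (n-1) / 4 with hkdef
  set s := 2 * k - (n-1) with hsdef
  set p := (n-1) - k with hpdef
  have hm : s + 2 * p = n - 1 := by omega
  have hp : 2 ≤ p := by omega
  have hs : 1 ≤ s := by omega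
  have hsp : s ≤ 2 * p := by omega
  have hk : s + p = k := by omega
  -- the branch sets
  set FS : Fin k → Set (Option (ZMod (n-1))) := fun a =>
    if a.val < s then {some ((2 * a.val : ℕ) : ZMod (n-1))}
    else {some ((Lf s (a.val - s) : ℕ) : ZMod (n-1)),
          some ((Lf s (a.val - s + p) : ℕ) : ZMod (n-1))} with hFS
  have hLub : ∀ i : ℕ, i < 2*p → Lf s i < n - 1 := fun i hi => hm ▸ Lf_ub hsp hi
  have hsm : ∀ t : ℕ, t < s → 2*t < n - 1 := by intro t ht; omega
  have hne_some : ∀ x y : ℕ, x < n-1 → y < n-1 → x ≠ y →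
      (some ((x:ℕ) : ZMod (n-1)) : Option (ZMod (n-1))) ≠ some ((y:ℕ) : ZMod (n-1)) := by
    intro x y hx hy hxy h
    rw [Option.some.injEq] at h
    exact hxy (natCast_inj' hx hy h)
  refine ⟨FS, ?_, ?_, ?_⟩
  · -- connectivity
    intro a
    rw [hFS]
    dsimp only
    rcases Nat.lt_or_ge a.val s with h | h
    · rw [if_pos h]
      exact connected_induce_singleton _ _
    · rw [if_neg (by omega : ¬ a.val < s)]
      apply connected_induce_pair
      have hj : a.val - s < p := by have := a.isLt; omega
      have hgap := Lf_gap s (show a.val - s < a.val - s + p by omega)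
      have h1 := Lf_lb hs (a.val - s)
      have h2 := Lf_lb hs (a.val - s + p)
      apply compl_adj_of_nat (hLub _ (by omega)) (hLub _ (by omega)) <;> omega
  · -- disjointness
    intro a b hab
    have haval : a.val ≠ b.val := fun h => hab (Fin.ext h)
    rw [hFS]
    dsimp only
    have hja : a.val - s < p := by have := a.isLt; omega
    have hjb : b.val - s < p := by have := b.isLt; omega
    split_ifs with h1 h2 h2
    · simp only [Set.disjoint_singleton]
      exact hne_some _ _ (hsm _ h1) (hsm _ h2) (by omega)
    · rw [Set.disjoint_singleton_left]
      simp only [Set.mem_insert_iff, Set.mem_singleton_iff]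
      push_neg
      constructor
      · exact hne_some _ _ (hsm _ h1) (hLub (b.val - s) (by omega))
          (Ne.symm (Lf_ne_even (p := p) (by omega) h1))
      · exact hne_some _ _ (hsm _ h1) (hLub (b.val - s + p) (by omega))
          (Ne.symm (Lf_ne_even (p := p) (by omega) h1))
    · rw [Set.disjoint_singleton_right]
      simp only [Set.mem_insert_iff, Set.mem_singleton_iff]
      push_neg
      constructor
      · exact hne_some _ _ (hsm _ h2) (hLub (a.val - s) (by omega))
          (Ne.symm (Lf_ne_even (p := p) (by omega) h2))
      · exact hne_some _ _ (hsm _ h2) (hLub (a.val - s + p) (by omega))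
          (Ne.symm (Lf_ne_even (p := p) (by omega) h2))
    · -- pair-pair
      have hij : a.val - s ≠ b.val - s := by omega
      have key : ∀ i j : ℕ, i < 2*p → j < 2*p → i ≠ j → Lf s i ≠ Lf s j := by
        intro i j hi hj hij'
        rcases Nat.lt_or_ge i j with h | h
        · have := Lf_gap s h; omega
        · have := Lf_gap s (show j < i by omega); omega
      rw [Set.disjoint_left]
      intro x hx hy
      simp only [Set.mem_insert_iff, Set.mem_singleton_iff] at hx hy
      rcases hx with rfl | rfl <;> rcases hy with hy | hy <;>
        exact hne_some _ _ (hLub _ (by omega)) (hLub _ (by omega))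
          (key _ _ (by omega) (by omega) (by omega)) hy
  · -- adjacency between branch sets
    intro a b hab
    have haval : a.val ≠ b.val := fun h => hab.ne (Fin.ext h)
    rw [hFS]
    dsimp only
    have hja : a.val - s < p := by have := a.isLt; omega
    have hjb : b.val - s < p := by have := b.isLt; omega
    split_ifs with h1 h2 h2
    · refine ⟨_, Set.mem_singleton _, _, Set.mem_singleton _, ?_⟩
      apply compl_adj_of_nat (hsm _ h1) (hsm _ h2) <;> omega
    · obtain ⟨w, hw, hcond⟩ := sp_witness hp hs hsp h1 hjb
      refine ⟨_, Set.mem_singleton _, some ((w:ℕ) : ZMod (n-1)), ?_, ?_⟩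
      · rcases hw with rfl | rfl
        · exact Set.mem_insert _ _
        · exact Set.mem_insert_of_mem _ rfl
      · have hwub : w < n - 1 := by
          rcases hw with rfl | rfl
          · exact hLub _ (by omega)
          · exact hLub _ (by omega)
        apply compl_adj_of_nat (hsm _ h1) hwub <;> omega
    · obtain ⟨w, hw, hcond⟩ := sp_witness hp hs hsp h2 hja
      refine ⟨some ((w:ℕ) : ZMod (n-1)), ?_, _, Set.mem_singleton _, ?_⟩
      · rcases hw with rfl | rfl
        · exact Set.mem_insert _ _
        · exact Set.mem_insert_of_mem _ rfl
      · have hwub : w < n - 1 := by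
          rcases hw with rfl | rfl
          · exact hLub _ (by omega)
          · exact hLub _ (by omega)
        exact (compl_adj_of_nat (hsm _ h2) hwub (by omega) (by omega) (by omega)
          (by omega) (by omega)).symm
    · -- pair-pair
      rcases Nat.lt_or_ge (a.val - s) (b.val - s) with hlt | hge
      · have hgap := Lf_gap s (show a.val - s < b.val - s + p by omega)
        have hlb := Lf_lb hs (a.val - s)
        have hlb2 := Lf_lb hs (b.val - s + p)
        refine ⟨_, Set.mem_insert _ _, _, Set.mem_insert_of_mem _ rfl, ?_⟩
        apply compl_adj_of_nat (hLub _ (by omega)) (hLub _ (by omega)) <;> omega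
      · have hlt : b.val - s < a.val - s := by omega
        have hgap := Lf_gap s (show b.val - s < a.val - s + p by omega)
        have hlb := Lf_lb hs (b.val - s)
        have hlb2 := Lf_lb hs (a.val - s + p)
        refine ⟨_, Set.mem_insert_of_mem _ rfl, _, Set.mem_insert _ _, ?_⟩
        exact (compl_adj_of_nat (hLub _ (by omega)) (hLub _ (by omega)) (by omega)
          (by omega) (by omega) (by omega) (by omega)).symm

lemma hub_isolated {n : ℕ} (v : Option (ZMod (n-1))) : ¬ (wheelGraph n)ᶜ.Adj none v := by
  intro h
  rw [compl_adj] at h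
  dsimp only [wheelGraph] at h
  exact h.2 ⟨h.1, Or.inl rfl⟩

lemma not_compl_adj_consec {n : ℕ} (u : ZMod (n-1)) :
    ¬ (wheelGraph n)ᶜ.Adj (some u) (some (u + 1)) := by
  intro h
  rw [compl_adj] at h
  dsimp only [wheelGraph] at h
  exact h.2 ⟨h.1, Or.inr (Or.inr ⟨u, u + 1, rfl, rfl, Or.inr (by ring)⟩)⟩

lemma upper_bound {n k : ℕ} (hn : 6 ≤ n)
    (h : IsMinorOf (⊤ : SimpleGraph (Fin k)) (wheelGraph n)ᶜ) : k ≤ 3 * (n - 1) / 4 := by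
  set m := n - 1 with hm
  have hm5 : 5 ≤ m := by omega
  haveI : NeZero m := ⟨by omega⟩
  by_cases hk : k ≤ 1
  · omega
  push_neg at hk
  obtain ⟨f, hconn, hdisj, hadj⟩ := h
  have hadj' : ∀ a b : Fin k, a ≠ b → ∃ u ∈ f a, ∃ v ∈ f b, (wheelGraph n)ᶜ.Adj u v := by
    intro a b hab
    exact hadj a b (by simp [hab])
  have hne : ∀ a, (f a).Nonempty := fun a => Set.nonempty_coe_sort.mp (hconn a).nonempty
  -- no branch set contains the hub
  have hub : ∀ a, none ∉ f a := by
    intro a hnone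
    by_cases hsing : ∃ x ∈ f a, x ≠ none
    · obtain ⟨x, hx, hxne⟩ := hsing
      obtain ⟨w⟩ := (hconn a).preconnected ⟨none, hnone⟩ ⟨x, hx⟩
      cases w with
      | nil => exact hxne rfl
      | cons hadjw p => exact hub_isolated _ hadjw
    · push_neg at hsing
      obtain ⟨b, hb⟩ : ∃ b : Fin k, b ≠ a := by
        rcases eq_or_ne a.val 0 with h0 | h0
        · exact ⟨⟨1, by omega⟩, fun h => by simp [Fin.ext_iff, h0] at h⟩
        · exact ⟨⟨0, by omega⟩, fun h => h0 (by simpa [Fin.ext_iff] using h.symm)⟩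
      obtain ⟨u, hu, v, hv, huv⟩ := hadj' a b hb.symm
      rw [hsing u hu] at huv
      exact hub_isolated v huv
  -- branch sets as finsets of rim vertices
  set F : Fin k → Finset (ZMod m) := fun a => ({i | some i ∈ f a}).toFinite.toFinset with hF
  have memF : ∀ a i, i ∈ F a ↔ some i ∈ f a := by
    intro a i; simp [hF, Set.Finite.mem_toFinset]; exact Iff.rfl
  have memf : ∀ a x, x ∈ f a → ∃ i, x = some i ∧ i ∈ F a := by
    intro a x hx
    match x with
    | none => exact absurd hx (hub a)
    | some i => exact ⟨i, rfl, (memF a i).mpr hx⟩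
  have hFdisj : ∀ a b : Fin k, a ≠ b → Disjoint (F a) (F b) := by
    intro a b hab
    rw [Finset.disjoint_left]
    intro i hia hib
    exact Set.disjoint_left.mp (hdisj a b hab) ((memF a i).mp hia) ((memF b i).mp hib)
  have hFne : ∀ a, (F a).Nonempty := by
    intro a
    obtain ⟨x, hx⟩ := hne a
    obtain ⟨i, rfl, hi⟩ := memf a x hx
    exact ⟨i, hi⟩
  -- total size bound
  have hsum : ∑ a : Fin k, (F a).card ≤ m := by
    rw [← Finset.card_biUnion (fun a _ b _ hab => hFdisj a b hab)]
    calc (Finset.univ.biUnion F).card ≤ Fintype.card (ZMod m) := Finset.card_le_univ _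
      _ = m := ZMod.card m
  -- singleton branch sets
  set T : Finset (Fin k) := Finset.univ.filter (fun a => (F a).card = 1) with hT
  have hsum_lb : T.card + 2 * (k - T.card) ≤ ∑ a : Fin k, (F a).card := by
    have hsplit := Finset.sum_filter_add_sum_filter_not Finset.univ
      (fun a => (F a).card = 1) (fun a => (F a).card)
    have h1 := Finset.card_nsmul_le_sum (Finset.univ.filter (fun a => (F a).card = 1))
      (fun a => (F a).card) 1 (fun a _ => Finset.card_pos.mpr (hFne a))
    have h2 := Finset.card_nsmul_le_sum (Finset.univ.filter (fun a => ¬ (F a).card = 1))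
      (fun a => (F a).card) 2
      (fun a ha => by
        simp only [Finset.mem_filter] at ha
        have := Finset.card_pos.mpr (hFne a)
        show 2 ≤ (F a).card
        omega)
    have h3 := Finset.card_filter_add_card_filter_not
      (s := (Finset.univ : Finset (Fin k))) (p := fun a => (F a).card = 1)
    simp only [smul_eq_mul, mul_one, Finset.card_univ, Fintype.card_fin] at h1 h2 h3 hsplit
    rw [← hT] at h1 h3 hsplit
    omega
  -- representatives of singleton sets
  set g : Fin k → ZMod m := fun a => (hFne a).choose with hg
  have hgmem : ∀ a, g a ∈ F a := fun a => (hFne a).choose_spec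
  have hsingle : ∀ a ∈ T, F a = {g a} := by
    intro a ha
    rw [hT, Finset.mem_filter] at ha
    obtain ⟨x, hx⟩ := Finset.card_eq_one.mp ha.2
    have hmem := hgmem a
    rw [hx, Finset.mem_singleton] at hmem
    rw [hx, hmem]
  set U : Finset (ZMod m) := T.image g with hU
  have hUcard : U.card = T.card := by
    apply Finset.card_image_of_injOn
    intro a ha b hb hgab
    by_contra hab
    exact Finset.disjoint_left.mp (hFdisj a b hab) (hgmem a) (hgab ▸ hgmem b)
  set V : Finset (ZMod m) := U.image (fun x => x + 1) with hV
  have hVcard : V.card = U.card :=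
    Finset.card_image_of_injective _ (add_left_injective 1)
  have hUV : Disjoint U V := by
    rw [Finset.disjoint_left]
    intro x hxU hxV
    simp only [hV, Finset.mem_image] at hxV
    obtain ⟨y, hyU, hyx⟩ := hxV
    simp only [hU, Finset.mem_image] at hxU hyU
    obtain ⟨a, haT, hga⟩ := hxU
    obtain ⟨b, hbT, hgb⟩ := hyU
    have hone : (1 : ZMod m) ≠ 0 := by
      haveI : Fact (1 < m) := ⟨by omega⟩
      exact one_ne_zero
    have hab : a ≠ b := by
      rintro rfl
      have hxy : x = y := by rw [← hga, hgb]
      have h10 : y + 1 = y + 0 := by rw [add_zero, hyx, hxy]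
      exact hone (add_left_cancel h10)
    obtain ⟨u, hu, v, hv, huv⟩ := hadj' b a hab.symm
    obtain ⟨i, rfl, hi⟩ := memf b u hu
    obtain ⟨j, rfl, hj⟩ := memf a v hv
    rw [hsingle b hbT, Finset.mem_singleton] at hi
    rw [hsingle a haT, Finset.mem_singleton] at hj
    subst hi; subst hj
    have : g a = g b + 1 := by rw [hga, ← hyx, hgb]
    rw [this] at huv
    exact not_compl_adj_consec _ huv
  have h2T : 2 * T.card ≤ m := by
    have hcard : (U ∪ V).card ≤ m := by
      calc (U ∪ V).card ≤ Fintype.card (ZMod m) := Finset.card_le_univ _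
        _ = m := ZMod.card m
    rw [Finset.card_union_of_disjoint hUV, hVcard, hUcard] at hcard
    omega
  have hTk : T.card ≤ k := by
    calc T.card ≤ (Finset.univ : Finset (Fin k)).card := Finset.card_le_card (Finset.filter_subset _ _)
      _ = k := by simp
  omega

/-- For `n ≥ 6`, the Hadwiger number of the complement of the wheel graph `W n`
is exactly `⌊3(n-1)/4⌋`. -/
theorem wheel_compl_hadwiger (n : ℕ) (hn : 6 ≤ n) :
    IsGreatest {k : ℕ | IsMinorOf (⊤ : SimpleGraph (Fin k)) (wheelGraph n)ᶜ}
      (3 * (n - 1) / 4) := by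
  constructor
  · exact lower_bound hn
  · intro k hk
    exact upper_bound hn hk
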